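/- For every matrix F ∈ ℝ^{3×3}, one has |√(FᵀF) − I| ≤ dist(F, SO(3)), where √(FᵀF) denotes the (positive semidefinite) matrix square root of FᵀF, I is the identity matrix, and dist(F, SO(3)) = inf_{R ∈ SO(3)} |F − R| in the Frobenius norm. -/

import Mathlib

open Matrix

noncomputable section

/-- Frobenius norm of a 3×3 real matrix. -/
def frob3 (M : Matrix (Fin 3) (Fin 3) ℝ) : ℝ := Real.sqrt (∑ i, ∑ j, (M i j) ^ 2)

/-- The set of rotations SO(3). -/
def SO3 : Set (Matrix (Fin 3) (Fin 3) ℝ) := {R | Rᵀ * R = 1 ∧ R.det = 1}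

/-- Frobenius distance of a matrix to SO(3). -/
def distSO3 (F : Matrix (Fin 3) (Fin 3) ℝ) : ℝ := sInf ((fun R => frob3 (F - R)) '' SO3)

lemma frob3_sum_eq_trace (M : Matrix (Fin 3) (Fin 3) ℝ) :
    ∑ i, ∑ j, (M i j) ^ 2 = Matrix.trace (Mᵀ * M) := by
  simp only [Matrix.trace, Matrix.diag, Matrix.mul_apply, Matrix.transpose_apply, sq]
  exact Finset.sum_comm

lemma star_eq_transpose (M : Matrix (Fin 3) (Fin 3) ℝ) : star M = Mᵀ := by
  ext i j
  simp [Matrix.star_apply]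

lemma trace_le (F P R : Matrix (Fin 3) (Fin 3) ℝ) (hP : P.PosSemidef)
    (hsq : P * P = Fᵀ * F) (hR : Rᵀ * R = 1) :
    Matrix.trace (Rᵀ * F) ≤ Matrix.trace P := by
  have hH := hP.1
  set U : Matrix (Fin 3) (Fin 3) ℝ := (hH.eigenvectorUnitary : Matrix (Fin 3) (Fin 3) ℝ) with hUdef
  set lam : Fin 3 → ℝ := hH.eigenvalues with hlam
  set D : Matrix (Fin 3) (Fin 3) ℝ := Matrix.diagonal lam with hD
  have hmem := hH.eigenvectorUnitary.2
  have hU1 : Uᵀ * U = 1 := by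
    have := (Matrix.mem_unitaryGroup_iff').mp hmem
    rwa [star_eq_transpose] at this
  have hU2 : U * Uᵀ = 1 := by
    have := (Matrix.mem_unitaryGroup_iff).mp hmem
    rwa [star_eq_transpose] at this
  have hspec : P = U * D * Uᵀ := by
    have := hH.spectral_theorem
    rwa [RCLike.ofReal_real_eq_id, Function.id_comp, Unitary.conjStarAlgAut_apply, star_eq_transpose] at this
  have hconj : ∀ A B : Matrix (Fin 3) (Fin 3) ℝ,
      (U * A * Uᵀ) * (U * B * Uᵀ) = U * (A * B) * Uᵀ := by
    intro A B
    have h1 : (U * A * Uᵀ) * (U * B * Uᵀ) = U * A * ((Uᵀ * U) * (B * Uᵀ)) := by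
      simp only [mul_assoc]
    rw [h1, hU1, one_mul, ← mul_assoc, mul_assoc U A B]
  have hconj2 : ∀ A : Matrix (Fin 3) (Fin 3) ℝ, Uᵀ * (U * A * Uᵀ) * U = A := by
    intro A
    have h1 : Uᵀ * (U * A * Uᵀ) * U = (Uᵀ * U) * (A * (Uᵀ * U)) := by
      simp only [mul_assoc]
    rw [h1, hU1, one_mul, mul_one]
  -- trace P = sum of eigenvalues
  have htrP : Matrix.trace P = ∑ i, lam i := by
    rw [hspec, Matrix.trace_mul_comm, ← mul_assoc, hU1, one_mul, hD, Matrix.trace_diagonal]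
  -- (R*U)ᵀ * (R*U) = 1
  have hG : (R * U)ᵀ * (R * U) = 1 := by
    have h1 : (R * U)ᵀ * (R * U) = Uᵀ * ((Rᵀ * R) * U) := by
      rw [Matrix.transpose_mul]; simp only [mul_assoc]
    rw [h1, hR, one_mul, hU1]
  -- (F*U)ᵀ * (F*U) = D * D
  have hFF : Fᵀ * F = U * (D * D) * Uᵀ := by rw [← hsq, hspec, hconj]
  have hHm : (F * U)ᵀ * (F * U) = D * D := by
    have h1 : (F * U)ᵀ * (F * U) = Uᵀ * (Fᵀ * F) * U := by
      rw [Matrix.transpose_mul]; simp only [mul_assoc]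
    rw [h1, hFF, hconj2]
  -- trace transfer
  have h3 : (R * U)ᵀ * (F * U) = Uᵀ * ((Rᵀ * F) * U) := by
    rw [Matrix.transpose_mul]; simp only [mul_assoc]
  have htr : Matrix.trace ((R * U)ᵀ * (F * U)) = Matrix.trace (Rᵀ * F) := by
    rw [h3, Matrix.trace_mul_comm, mul_assoc, hU2, mul_one]
  -- main estimate, entrywise Cauchy-Schwarz
  have hmain : Matrix.trace ((R * U)ᵀ * (F * U)) ≤ ∑ i, lam i := by
    rw [Matrix.trace]
    apply Finset.sum_le_sum
    intro i _
    have ha : ∑ k, ((R * U) k i) ^ 2 = 1 := by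
      have h := congrFun (congrFun hG i) i
      simp only [Matrix.mul_apply, Matrix.transpose_apply, Matrix.one_apply_eq, sq] at h ⊢
      exact h
    have hb : ∑ k, ((F * U) k i) ^ 2 = lam i ^ 2 := by
      have h := congrFun (congrFun hHm i) i
      rw [hD, Matrix.diagonal_mul_diagonal] at h
      simp only [Matrix.mul_apply, Matrix.transpose_apply, Matrix.diagonal_apply_eq,
        Pi.mul_apply, sq] at h ⊢
      exact h
    have hlam_nn : 0 ≤ lam i := hP.eigenvalues_nonneg i
    have hCS := Finset.sum_mul_sq_le_sq_mul_sq Finset.univ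
      (fun k => (R * U) k i) (fun k => (F * U) k i)
    have hdiag : ((R * U)ᵀ * (F * U)) i i = ∑ k, (R * U) k i * (F * U) k i := by
      rw [Matrix.mul_apply]
      simp only [Matrix.transpose_apply]
    rw [Matrix.diag_apply, hdiag]
    nlinarith [hCS, ha, hb]
  linarith [htrP, htr, hmain]

/-- For every 3×3 matrix F, the positive semidefinite square root of FᵀF satisfies
`|√(FᵀF) − I| ≤ dist(F, SO(3))` in the Frobenius norm. -/
theorem stmt0 (F P : Matrix (Fin 3) (Fin 3) ℝ) (hP : P.PosSemidef)
    (hsq : P * P = Fᵀ * F) :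
    frob3 (P - 1) ≤ distSO3 F := by
  apply le_csInf
  · exact ⟨frob3 (F - 1), ⟨1, ⟨by simp, by simp⟩, rfl⟩⟩
  rintro b ⟨R, ⟨hR1, hR2⟩, rfl⟩
  unfold frob3
  apply Real.sqrt_le_sqrt
  rw [frob3_sum_eq_trace, frob3_sum_eq_trace]
  have hPt : Pᵀ = P := by
    have h := hP.1
    ext i j
    simpa [Matrix.conjTranspose_apply] using congrFun (congrFun h i) j
  have key := trace_le F P R hP hsq hR1
  have e1 : (P - 1)ᵀ * (P - 1) = P * P - P - P + 1 := by
    rw [Matrix.transpose_sub, Matrix.transpose_one, hPt]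
    noncomm_ring
  have e2 : (F - R)ᵀ * (F - R) = P * P - Fᵀ * R - Rᵀ * F + 1 := by
    rw [Matrix.transpose_sub, hsq]
    rw [Matrix.sub_mul, Matrix.mul_sub, Matrix.mul_sub, hR1]
    noncomm_ring
  have etr : Matrix.trace (Fᵀ * R) = Matrix.trace (Rᵀ * F) := by
    rw [← Matrix.trace_transpose (Fᵀ * R), Matrix.transpose_mul, Matrix.transpose_transpose]
  rw [e1, e2]
  simp only [Matrix.trace_add, Matrix.trace_sub]
  linarith [key, etr.ge, etr.le]
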